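/- Given a PHPP ψ and strictly positive S, define Z_K = ψ_K and, backwards, Z_{k-1} = ψ_{k-1}(Z_k·S_k) / (S_{k-1} + ψ_{k-1}(Z_k·S_k)) for k = K,...,1. Then the process X defined by X_k = Z_k·A_k satisfies X_k = ψ_k(X_{k+1}) for all k < K and X_K = ψ_K·A_K, is nonnegative, and is regular w.r.t. S. -/

import Mathlib

open MeasureTheory Finset

/-- the backward recursion `Z_K = ψ_K`,
`Z_{k} = ψ_{k}(Z_{k+1} S_{k+1})/(S_{k} + ψ_{k}(Z_{k+1} S_{k+1}))` yields, via
`X_k = Z_k·A_k`, a nonnegative regular consumption process with the PHPP `ψ`. -/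
theorem PHPP_existence
    {Ω : Type*} {m : MeasurableSpace Ω} (K : ℕ) (ℱ : Filtration ℕ m)
    (S A : ℕ → Ω → ℝ) (X Z : ℕ → Ω → ℝ)
    (hSadapted : ∀ k : ℕ, Measurable[ℱ k] (S k))
    (hSpos : ∀ k ω, 0 < S k ω)
    (ψ : ℕ → (Ω → ℝ) → (Ω → ℝ)) (ψK : Ω → ℝ)
    (hψmeas : ∀ k < K, ∀ f : Ω → ℝ, Measurable[ℱ (k + 1)] f → Measurable[ℱ k] (ψ k f))
    (hψpos : ∀ k < K, ∀ f : Ω → ℝ, (∀ ω, 0 ≤ f ω) → ∀ ω, 0 ≤ ψ k f ω)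
    (hψneg : ∀ k < K, ∀ f : Ω → ℝ, (∀ ω, f ω ≤ 0) → ∀ ω, ψ k f ω ≤ 0)
    (hψhom : ∀ k < K, ∀ f g : Ω → ℝ, Measurable[ℱ (k + 1)] f → Measurable[ℱ k] g →
      (∀ ω, 0 ≤ g ω) → ψ k (fun ω => g ω * f ω) = fun ω => g ω * ψ k f ω)
    (hψKmeas : Measurable[ℱ K] ψK) (hψK01 : ∀ ω, 0 ≤ ψK ω ∧ ψK ω ≤ 1)
    -- backward recursion for the relative rates
    (hZK : Z K = ψK)
    (hZrec : ∀ k < K, ∀ ω, Z k ω =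
      ψ k (fun ω' => Z (k + 1) ω' * S (k + 1) ω') ω /
        (S k ω + ψ k (fun ω' => Z (k + 1) ω' * S (k + 1) ω') ω))
    -- the consumption process and the account
    (hX : ∀ k ≤ K, ∀ ω, X k ω = Z k ω * A k ω)
    (hA0 : ∀ ω, A 0 ω = S 0 ω)
    (hArec : ∀ k < K, ∀ ω, A (k + 1) ω = (A k ω - X k ω) * S (k + 1) ω / S k ω) :
    (∀ k < K, X k = ψ k (X (k + 1))) ∧
    (∀ ω, X K ω = ψK ω * A K ω) ∧
    (∀ k ≤ K, ∀ ω, 0 ≤ X k ω ∧ X k ω ≤ A k ω) := by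
  -- Z is adapted and valued in [0,1], by backward induction
  have hZfacts : ∀ d : ℕ, ∀ k, k + d = K →
      Measurable[ℱ k] (Z k) ∧ (∀ ω, 0 ≤ Z k ω ∧ Z k ω ≤ 1) := by
    intro d
    induction d with
    | zero =>
      intro k hk
      have : k = K := by omega
      subst this
      rw [hZK]
      exact ⟨hψKmeas, hψK01⟩
    | succ d ih =>
      intro k hk
      have hkK : k < K := by omega
      obtain ⟨hm1, hb1⟩ := ih (k + 1) (by omega)
      set f : Ω → ℝ := fun ω => Z (k + 1) ω * S (k + 1) ω with hf
      have hfm : Measurable[ℱ (k + 1)] f := hm1.mul (hSadapted (k + 1))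
      have hfpos : ∀ ω, 0 ≤ f ω := fun ω => mul_nonneg (hb1 ω).1 (hSpos (k + 1) ω).le
      have hPm : Measurable[ℱ k] (ψ k f) := hψmeas k hkK f hfm
      have hPpos : ∀ ω, 0 ≤ ψ k f ω := hψpos k hkK f hfpos
      have hZeq : Z k = fun ω => ψ k f ω / (S k ω + ψ k f ω) :=
        funext fun ω => hZrec k hkK ω
      refine ⟨?_, ?_⟩
      · rw [hZeq]; exact hPm.div ((hSadapted k).add hPm)
      · intro ω
        have hd : (0:ℝ) < S k ω + ψ k f ω := by
          have := hSpos k ω; have := hPpos ω; linarith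
        rw [hZeq]
        refine ⟨div_nonneg (hPpos ω) hd.le, ?_⟩
        rw [div_le_one hd]
        have := hSpos k ω; linarith
  have hZall : ∀ k ≤ K, Measurable[ℱ k] (Z k) ∧ (∀ ω, 0 ≤ Z k ω ∧ Z k ω ≤ 1) :=
    fun k hk => hZfacts (K - k) k (by omega)
  -- A is adapted and nonnegative, by forward induction
  have hAfacts : ∀ k ≤ K, Measurable[ℱ k] (A k) ∧ (∀ ω, 0 ≤ A k ω) := by
    intro k
    induction k with
    | zero =>
      intro _
      have hA0' : A 0 = S 0 := funext hA0
      rw [hA0']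
      exact ⟨hSadapted 0, fun ω => (hSpos 0 ω).le⟩
    | succ k ih =>
      intro hk
      have hkK : k < K := hk
      obtain ⟨hAm, hApos⟩ := ih (by omega)
      obtain ⟨hZm, hZb⟩ := hZall k (by omega)
      have hXeq : X k = fun ω => Z k ω * A k ω := funext (hX k (by omega))
      have hXm : Measurable[ℱ k] (X k) := by rw [hXeq]; exact hZm.mul hAm
      have hAeq : A (k + 1) = fun ω => (A k ω - X k ω) * S (k + 1) ω / S k ω :=
        funext (hArec k hkK)
      have hXle : ∀ ω, X k ω ≤ A k ω := by
        intro ω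
        rw [hX k (by omega) ω]
        calc Z k ω * A k ω ≤ 1 * A k ω :=
              mul_le_mul_of_nonneg_right (hZb ω).2 (hApos ω)
          _ = A k ω := one_mul _
      refine ⟨?_, ?_⟩
      · rw [hAeq]
        have hAm' : Measurable[ℱ (k + 1)] (A k) := hAm.mono (ℱ.mono (Nat.le_succ k)) le_rfl
        have hXm' : Measurable[ℱ (k + 1)] (X k) := hXm.mono (ℱ.mono (Nat.le_succ k)) le_rfl
        have hSm' : Measurable[ℱ (k + 1)] (S k) :=
          (hSadapted k).mono (ℱ.mono (Nat.le_succ k)) le_rfl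
        exact ((hAm'.sub hXm').mul (hSadapted (k + 1))).div hSm'
      · intro ω
        rw [hArec k hkK ω]
        have h1 : 0 ≤ A k ω - X k ω := by have := hXle ω; linarith
        exact div_nonneg (mul_nonneg h1 (hSpos (k + 1) ω).le) (hSpos k ω).le
  refine ⟨?_, ?_, ?_⟩
  · -- the PHPP property
    intro k hkK
    obtain ⟨hAm, hApos⟩ := hAfacts k hkK.le
    obtain ⟨hZm, hZb⟩ := hZall k hkK.le
    obtain ⟨hZm1, hZb1⟩ := hZall (k + 1) hkK
    set f : Ω → ℝ := fun ω => Z (k + 1) ω * S (k + 1) ω with hf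
    have hfm : Measurable[ℱ (k + 1)] f := hZm1.mul (hSadapted (k + 1))
    have hfpos : ∀ ω, 0 ≤ f ω := fun ω => mul_nonneg (hZb1 ω).1 (hSpos (k + 1) ω).le
    set g : Ω → ℝ := fun ω => (A k ω - X k ω) / S k ω with hg
    have hXeq : ∀ ω, X k ω = Z k ω * A k ω := hX k hkK.le
    have hXm : Measurable[ℱ k] (X k) := by
      rw [funext hXeq]; exact hZm.mul hAm
    have hgm : Measurable[ℱ k] g := (hAm.sub hXm).div (hSadapted k)
    have hXle : ∀ ω, X k ω ≤ A k ω := by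
      intro ω
      rw [hXeq ω]
      calc Z k ω * A k ω ≤ 1 * A k ω :=
            mul_le_mul_of_nonneg_right (hZb ω).2 (hApos ω)
        _ = A k ω := one_mul _
    have hgpos : ∀ ω, 0 ≤ g ω := fun ω =>
      div_nonneg (by have := hXle ω; linarith) (hSpos k ω).le
    have hX1 : X (k + 1) = fun ω => g ω * f ω := by
      funext ω
      rw [hX (k + 1) hkK ω, hArec k hkK ω]
      simp only [hg, hf]
      ring
    rw [hX1, hψhom k hkK f g hfm hgm hgpos]
    funext ω
    have hPpos := hψpos k hkK f hfpos ω
    have hSk := hSpos k ω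
    have hden : S k ω + ψ k f ω ≠ 0 := by linarith
    have hSne : S k ω ≠ 0 := ne_of_gt hSk
    rw [hXeq ω, hZrec k hkK ω]
    simp only [hg]
    rw [hXeq ω, hZrec k hkK ω]
    rw [← hf]
    field_simp
    ring
  · -- terminal value
    intro ω
    rw [hX K le_rfl ω, hZK]
  · -- nonnegativity and regularity
    intro k hk ω
    obtain ⟨hAm, hApos⟩ := hAfacts k hk
    obtain ⟨hZm, hZb⟩ := hZall k hk
    rw [hX k hk ω]
    refine ⟨mul_nonneg (hZb ω).1 (hApos ω), ?_⟩
    calc Z k ω * A k ω ≤ 1 * A k ω :=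
          mul_le_mul_of_nonneg_right (hZb ω).2 (hApos ω)
      _ = A k ω := one_mul _
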